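/- Let 0 < ε' < 1 and let I = [k, j) be an interval of length L. If a is an (ε'/2)-approximate φ-quantile of the multiset of values on an interval of length L, then a is an ε'-approximate φ-quantile of the multiset of values on any interval of length L' with L ≤ L' ≤ (1 + ε'/2)L that contains the first interval, provided the two intervals share the same right endpoint and the larger one extends to the left. Formally: if the rank of a in a multiset Q of size L lies in [(φ - ε'/2)L, (φ + ε'/2)L], and Q ⊆ Q' with |Q'| = L' ≤ (1 + ε'/2)L, then the rank of a in Q' lies in [(φ - ε')L', (φ + ε')L']. -/

import Mathlib

theorem approximate_quantile_extension {α : Type*} [LinearOrder α]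
    (ε' φ : ℝ) (hε0 : 0 < ε') (hε1 : ε' < 1) (hφ0 : 0 ≤ φ) (hφ1 : φ ≤ 1)
    (Q Q' : Multiset α) (a : α) (ha : a ∈ Q) (hsub : Q ≤ Q')
    (L L' : ℕ) (hL : Multiset.card Q = L) (hL' : Multiset.card Q' = L')
    (hLL' : L ≤ L') (hup : (L' : ℝ) ≤ (1 + ε'/2) * (L : ℝ))
    (r r' : ℝ)
    (hr1 : (φ - ε'/2) * (L : ℝ) ≤ r) (hr2 : r ≤ (φ + ε'/2) * (L : ℝ))
    (hr'1 : r ≤ r') (hr'2 : r' ≤ r + ((L' : ℝ) - (L : ℝ))) :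
    (φ - ε') * (L' : ℝ) ≤ r' ∧ r' ≤ (φ + ε') * (L' : ℝ) := by
  have hLL : (L : ℝ) ≤ (L' : ℝ) := Nat.cast_le.mpr hLL'
  have hL0 : (0 : ℝ) ≤ (L : ℝ) := Nat.cast_nonneg _
  constructor
  · rcases le_or_gt ε' φ with h | h
    · nlinarith [mul_nonneg (sub_nonneg.mpr h) (sub_nonneg.mpr hLL)]
    · nlinarith [mul_nonneg (le_of_lt (sub_pos.mpr h)) (sub_nonneg.mpr hLL)]
  · rcases le_or_gt (1 : ℝ) (φ + ε') with h | h
    · nlinarith [mul_nonneg (sub_nonneg.mpr h) (sub_nonneg.mpr hLL)]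
    · nlinarith [mul_nonneg (le_of_lt (sub_pos.mpr h)) (sub_nonneg.mpr hLL), mul_nonneg (le_of_lt hε0) hL0]
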